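/- Let J be an Artinian lex-segment ideal in T = K[z_1,…,z_c] of initial degree α, and let t be the largest integer with [T/J]_t ≠ 0. Then there exist uniquely determined ideals I_0 ⊆ I_1 ⊆ ⋯ ⊆ I_{α−1} ⊊ I_α = T, each I_j for j < α being the extension to T of a monomial ideal of T̄ = K[z_2,…,z_c], such that J = Σ_{j=0}^{α} z_1^j·I_j; moreover (z_2,…,z_c)^{t+1−j} ⊆ I_j ⊆ (z_2,…,z_c)^{α−j} for 0 ≤ j ≤ α−1, each I_j ∩ T̄ is an Artinian lex-segment ideal of T̄, and for 0 ≤ j ≤ α−2 the initial degree of I_j is strictly greater than 1 + max{ i : [T̄/(I_{j+1} ∩ T̄)]_i ≠ 0 }. -/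

import Mathlib

open MvPolynomial

namespace GorensteinSI

/-- `b <ₗ a` in the lexicographic order on monomials (identified with their exponent
vectors): the first nonzero coordinate of the difference is negative. -/
def lexLT {c : ℕ} (b a : Fin c →₀ ℕ) : Prop :=
  ∃ i : Fin c, b i < a i ∧ ∀ j : Fin c, j < i → b j = a j

/-- A monomial ideal: an ideal containing, with any element, all monomials in its
support. -/
def IsMonomialIdeal {K : Type} [Field K] {c : ℕ}
    (J : Ideal (MvPolynomial (Fin c) K)) : Prop :=
  ∀ p ∈ J, ∀ a ∈ p.support, (monomial a (1 : K)) ∈ J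

/-- A lex-segment ideal of `T = K[z_1,…,z_c]`: a monomial ideal such that whenever it
contains a monomial `m₂` it contains every monomial `m₁ > m₂` of the same degree in the
(degree-)lexicographic order. -/
def IsLexSegmentIdeal {K : Type} [Field K] {c : ℕ}
    (J : Ideal (MvPolynomial (Fin c) K)) : Prop :=
  IsMonomialIdeal J ∧
    ∀ a b : Fin c →₀ ℕ, a.degree = b.degree → lexLT b a →
      (monomial b (1 : K)) ∈ J → (monomial a (1 : K)) ∈ J

/-- The irrelevant ideal `(z_2,…,z_c)` of `T̄ = K[z_2,…,z_c]`, extended to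
`T = K[z_1,…,z_c]` (the variable `z_1` has index `0`). -/
noncomputable def mBar (K : Type) [Field K] (c : ℕ) : Ideal (MvPolynomial (Fin c) K) :=
  Ideal.span {q | ∃ i : Fin c, i.1 ≠ 0 ∧ q = X i}

/-- The defining properties of the decomposition `J = Σ_{j=0}^{α} z_1^j · I_j` of an
Artinian lex-segment ideal: the `I_j` form an increasing chain with `I_{α-1} ⊊ I_α = T`,
each `I_j` (for `j < α`) is the extension of a monomial ideal of `T̄ = K[z_2,…,z_c]`,
and the sum of the `z_1^j·I_j` is `J`. -/
def IsDecompositionOf {K : Type} [Field K] {c : ℕ} (hc : 1 ≤ c)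
    (J : Ideal (MvPolynomial (Fin c) K)) (α : ℕ)
    (I : ℕ → Ideal (MvPolynomial (Fin c) K)) : Prop :=
  (∀ j, j < α → I j ≤ I (j + 1)) ∧ I α = ⊤ ∧ (1 ≤ α → I (α - 1) ≠ ⊤) ∧
    (∀ j, j < α → ∃ S : Set (Fin c →₀ ℕ),
      (∀ a ∈ S, ∀ i : Fin c, i.1 = 0 → a i = 0) ∧
      I j = Ideal.span ((fun a => monomial a (1 : K)) '' S)) ∧
    J = ∑ j ∈ Finset.range (α + 1),
          Ideal.span {(X (⟨0, by omega⟩ : Fin c) : MvPolynomial (Fin c) K) ^ j} * I j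


variable {K : Type} [Field K] {σ : Type*}

lemma degree_add' (f g : σ →₀ ℕ) : (f + g).degree = f.degree + g.degree := by
  simp [Finsupp.degree_eq_weight_one, map_add]

lemma degree_single' (i : σ) (n : ℕ) : (Finsupp.single i n).degree = n := by
  simp [Finsupp.degree_eq_weight_one, Finsupp.weight_apply, Finsupp.sum_single_index]

lemma mem_span_monomials_support {S : Set (σ →₀ ℕ)} {p : MvPolynomial σ K}
    (hp : p ∈ Ideal.span ((fun a => monomial a (1 : K)) '' S)) :
    ∀ m ∈ p.support, ∃ s ∈ S, s ≤ m := by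
  classical
  refine Submodule.span_induction ?_ ?_ ?_ ?_ hp
  · rintro _ ⟨s, hs, rfl⟩ m hm
    rw [support_monomial, if_neg one_ne_zero, Finset.mem_singleton] at hm
    exact ⟨s, hs, hm ▸ le_refl _⟩
  · simp
  · intro x y hx hy px py m hm
    rcases Finset.mem_union.1 (support_add hm) with h | h
    · exact px m h
    · exact py m h
  · intro r x hx px m hm
    rw [smul_eq_mul] at hm
    obtain ⟨u, hu, v, hv, rfl⟩ := Finset.mem_add.1 (support_mul r x hm)
    obtain ⟨s, hs, hsv⟩ := px v hv
    exact ⟨s, hs, le_trans hsv (self_le_add_left _ _)⟩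

lemma monomial_mem_span_iff {S : Set (σ →₀ ℕ)} {m : σ →₀ ℕ} :
    monomial m (1 : K) ∈ Ideal.span ((fun a => monomial a (1 : K)) '' S) ↔
      ∃ s ∈ S, s ≤ m := by
  classical
  constructor
  · intro h
    exact mem_span_monomials_support h m (by
      rw [support_monomial, if_neg one_ne_zero]; exact Finset.mem_singleton_self m)
  · rintro ⟨s, hs, hsm⟩
    have : monomial m (1 : K) = monomial (m - s) 1 * monomial s 1 := by
      rw [monomial_mul, one_mul, tsub_add_cancel_of_le hsm]
    rw [this]
    exact Ideal.mul_mem_left _ _ (Ideal.subset_span ⟨s, hs, rfl⟩)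

lemma mem_ideal_of_support {I : Ideal (MvPolynomial σ K)} {p : MvPolynomial σ K}
    (h : ∀ m ∈ p.support, monomial m (1 : K) ∈ I) : p ∈ I := by
  rw [p.as_sum]
  refine Ideal.sum_mem _ fun v hv => ?_
  have : (monomial v) (coeff v p) = C (coeff v p) * monomial v (1 : K) := by
    rw [C_mul_monomial, mul_one]
  rw [this]
  exact Ideal.mul_mem_left _ _ (h v hv)

lemma sum_span_eq_span_union (n : ℕ) (U : ℕ → Set (MvPolynomial σ K)) :
    ∑ j ∈ Finset.range n, Ideal.span (U j) =
      Ideal.span (⋃ j ∈ Finset.range n, U j) := by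
  induction n with
  | zero => simp
  | succ n ih =>
      rw [Finset.sum_range_succ, ih, Finset.range_add_one, Finset.set_biUnion_insert,
        Ideal.span_union, Submodule.add_eq_sup, sup_comm]

lemma ideal_le_sum {R : Type*} [Semiring R] {M : Type*} [AddCommMonoid M] [Module R M]
    {f : ℕ → Submodule R M} {s : Finset ℕ} {j : ℕ} (hj : j ∈ s) :
    f j ≤ ∑ i ∈ s, f i := by
  classical
  rw [← Finset.add_sum_erase _ _ hj, Submodule.add_eq_sup]
  exact le_sup_left



section Aux
variable {K : Type} [Field K] {c : ℕ}

lemma degree_mono {σ : Type*} {s b : σ →₀ ℕ} (h : s ≤ b) : s.degree ≤ b.degree := by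
  have h1 := tsub_add_cancel_of_le h
  have h2 := congrArg Finsupp.degree h1
  rw [degree_add'] at h2
  omega

lemma sum_ideal_le {R : Type*} [CommRing R] {f : ℕ → Ideal R} {s : Finset ℕ} {I : Ideal R}
    (h : ∀ j ∈ s, f j ≤ I) : ∑ j ∈ s, f j ≤ I := by
  classical
  induction s using Finset.induction with
  | empty => simp
  | insert x s hx ih =>
      rw [Finset.sum_insert hx, Submodule.add_eq_sup]
      exact sup_le (h _ (Finset.mem_insert_self _ _))
        (ih fun j hj => h j (Finset.mem_insert_of_mem hj))

lemma X_eq_monomial (i : Fin c) : (X i : MvPolynomial (Fin c) K) = monomial (Finsupp.single i 1) 1 := by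
  rw [← X_pow_eq_monomial, pow_one]

lemma lexLT_max (hc : 1 ≤ c) (b : Fin c →₀ ℕ) (n : ℕ) (hdeg : b.degree = n)
    (hne : b ≠ Finsupp.single ⟨0, hc⟩ n) : lexLT b (Finsupp.single ⟨0, hc⟩ n) := by
  have hble : b ⟨0, hc⟩ ≤ n := hdeg ▸ Finsupp.le_degree _ b
  have hblt : b ⟨0, hc⟩ < n := by
    rcases lt_or_eq_of_le hble with h | h
    · exact h
    · exfalso
      apply hne
      have hle : Finsupp.single (⟨0, hc⟩ : Fin c) n ≤ b := Finsupp.single_le_iff.2 (le_of_eq h.symm)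
      have hsum := tsub_add_cancel_of_le hle
      have hd := congrArg Finsupp.degree hsum
      rw [degree_add', degree_single', hdeg] at hd
      have h0 : b - Finsupp.single (⟨0, hc⟩ : Fin c) n = 0 := by
        rw [← Finsupp.degree_eq_zero_iff]; omega
      rw [h0, zero_add] at hsum
      exact hsum.symm
  refine ⟨⟨0, hc⟩, ?_, ?_⟩
  · rwa [Finsupp.single_eq_same]
  · intro j hj
    exact absurd (Fin.lt_def.1 hj) (Nat.not_lt_zero _)

lemma lexLT_add_single (hc : 1 ≤ c) {a b : Fin c →₀ ℕ} (ha : a ⟨0, hc⟩ = 0)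
    (hb : b ⟨0, hc⟩ = 0) (h : lexLT b a) (k : ℕ) :
    lexLT (Finsupp.single ⟨0, hc⟩ k + b) (Finsupp.single ⟨0, hc⟩ k + a) := by
  obtain ⟨i, hlt, heq⟩ := h
  have hie : i ≠ ⟨0, hc⟩ := by
    intro hh
    rw [hh, ha] at hlt
    exact Nat.not_lt_zero _ hlt
  refine ⟨i, ?_, ?_⟩
  · rw [Finsupp.add_apply, Finsupp.add_apply, Finsupp.single_apply,
      if_neg (fun hh => hie hh.symm)]
    simpa using hlt
  · intro j hj
    rw [Finsupp.add_apply, Finsupp.add_apply]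
    by_cases hje : j = ⟨0, hc⟩
    · rw [hje, ha, hb]
    · rw [heq j hj]

lemma monomial_mem_mBar_pow (hc : 1 ≤ c) {b : Fin c →₀ ℕ} (hb : b ⟨0, hc⟩ = 0) {k : ℕ}
    (hk : k ≤ b.degree) : monomial b (1 : K) ∈ (mBar K c) ^ k := by
  induction k generalizing b with
  | zero => simp
  | succ k ih =>
    have hb0 : b ≠ 0 := by
      intro h
      rw [h, map_zero] at hk
      omega
    obtain ⟨i, hi⟩ : ∃ i, b i ≠ 0 := by
      by_contra h
      push_neg at h
      exact hb0 (Finsupp.ext h)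
    have hie : i ≠ ⟨0, hc⟩ := fun h => hi (h ▸ hb)
    have hle : Finsupp.single i 1 ≤ b := Finsupp.single_le_iff.2 (Nat.one_le_iff_ne_zero.2 hi)
    have hsum : Finsupp.single i 1 + (b - Finsupp.single i 1) = b := by
      rw [add_comm]; exact tsub_add_cancel_of_le hle
    have hdeg : (b - Finsupp.single i 1).degree + 1 = b.degree := by
      have h2 := congrArg Finsupp.degree hsum
      rw [degree_add', degree_single'] at h2
      omega
    have hb' : ((b - Finsupp.single i 1 : Fin c →₀ ℕ)) (⟨0, hc⟩ : Fin c) = 0 := by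
      rw [Finsupp.tsub_apply, hb]
      simp
    have hmem := ih hb' (by omega)
    have heq : monomial b (1 : K) = monomial (b - Finsupp.single i 1) 1 * X i := by
      rw [X_eq_monomial, monomial_mul, mul_one, add_comm, hsum]
    rw [heq, pow_succ]
    exact Ideal.mul_mem_mul hmem (Ideal.subset_span ⟨i, fun h => hie (Fin.ext h), rfl⟩)

lemma mBar_pow_le (hc : 1 ≤ c) (k : ℕ) :
    (mBar K c) ^ k ≤
      Ideal.span ((fun a => monomial a (1 : K)) ''
        {b : Fin c →₀ ℕ | b ⟨0, hc⟩ = 0 ∧ k ≤ b.degree}) := by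
  induction k with
  | zero =>
    rw [pow_zero]
    have h1 : monomial (0 : Fin c →₀ ℕ) (1 : K) ∈
        Ideal.span ((fun a => monomial a (1 : K)) ''
          {b : Fin c →₀ ℕ | b ⟨0, hc⟩ = 0 ∧ 0 ≤ b.degree}) :=
      Ideal.subset_span ⟨0, ⟨rfl, Nat.zero_le _⟩, rfl⟩
    rw [monomial_zero'] at h1
    simp only [map_one] at h1
    rw [Ideal.one_eq_top]
    exact le_of_eq ((Ideal.eq_top_iff_one _).2 h1).symm
  | succ k ih =>
    rw [pow_succ]
    refine le_trans (Ideal.mul_mono ih (le_refl (mBar K c))) ?_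
    rw [mBar, Ideal.span_mul_span']
    refine Ideal.span_le.2 ?_
    rintro q hq
    obtain ⟨x, hx, y, hy, rfl⟩ := Set.mem_mul.1 hq
    obtain ⟨b, hb, rfl⟩ := hx
    obtain ⟨i, hi, rfl⟩ := hy
    have heq : monomial b (1 : K) * X i = monomial (b + Finsupp.single i 1) 1 := by
      rw [X_eq_monomial, monomial_mul, mul_one]
    rw [heq]
    refine Ideal.subset_span ⟨b + Finsupp.single i 1, ⟨?_, ?_⟩, rfl⟩
    · rw [Finsupp.add_apply, hb.1, Finsupp.single_apply,
        if_neg (fun hh : i = (⟨0, hc⟩ : Fin c) => hi (by rw [hh]))]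
      simp
    · rw [degree_add', degree_single']
      have := hb.2
      omega

end Aux
section Main
variable {K : Type} [Field K] {c : ℕ}

/-- The set of `T̄`-exponents `a` with `z_1^j·z^a ∈ J`. -/
def Sset (hc : 1 ≤ c) (J : Ideal (MvPolynomial (Fin c) K)) (j : ℕ) : Set (Fin c →₀ ℕ) :=
  {a | a ⟨0, hc⟩ = 0 ∧ (monomial (Finsupp.single (⟨0, hc⟩ : Fin c) j + a) (1 : K)) ∈ J}

/-- The ideals `I_j` of the decomposition. -/
noncomputable def Idl (hc : 1 ≤ c) (J : Ideal (MvPolynomial (Fin c) K)) (α j : ℕ) :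
    Ideal (MvPolynomial (Fin c) K) :=
  if α ≤ j then ⊤ else Ideal.span ((fun a => monomial a (1 : K)) '' Sset hc J j)

lemma Idl_of_le (hc : 1 ≤ c) (J : Ideal (MvPolynomial (Fin c) K)) {α j : ℕ} (h : α ≤ j) :
    Idl hc J α j = ⊤ := if_pos h

lemma Idl_of_lt (hc : 1 ≤ c) (J : Ideal (MvPolynomial (Fin c) K)) {α j : ℕ} (h : j < α) :
    Idl hc J α j = Ideal.span ((fun a => monomial a (1 : K)) '' Sset hc J j) :=
  if_neg (by omega)

lemma erase_single_add (hc : 1 ≤ c) (k : ℕ) {b : Fin c →₀ ℕ} (hb : b ⟨0, hc⟩ = 0) :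
    Finsupp.erase (⟨0, hc⟩ : Fin c) (Finsupp.single (⟨0, hc⟩ : Fin c) k + b) = b := by
  ext i
  by_cases hie : i = ⟨0, hc⟩
  · rw [hie, Finsupp.erase_same, hb]
  · rw [Finsupp.erase_ne hie, Finsupp.add_apply, Finsupp.single_apply,
      if_neg (fun hh => hie hh.symm), zero_add]

lemma apply_single_add (hc : 1 ≤ c) (k : ℕ) {b : Fin c →₀ ℕ} (hb : b ⟨0, hc⟩ = 0) :
    (Finsupp.single (⟨0, hc⟩ : Fin c) k + b) ⟨0, hc⟩ = k := by
  rw [Finsupp.add_apply, Finsupp.single_eq_same, hb, add_zero]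

end Main

set_option maxHeartbeats 1000000 in
/-- Lemma 5.3:  let `J` be an Artinian lex-segment ideal in `T = K[z_1,…,z_c]` of
initial degree `α`, and let `t` be the largest integer with `[T/J]_t ≠ 0`.  Then there
are uniquely determined ideals `I_0 ⊆ I_1 ⊆ ⋯ ⊆ I_{α−1} ⊊ I_α = T`, each `I_j` (for
`j < α`) being the extension to `T` of a monomial ideal of `T̄ = K[z_2,…,z_c]`, with
`J = Σ_{j=0}^{α} z_1^j·I_j`; moreover `(z_2,…,z_c)^{t+1−j} ⊆ I_j ⊆ (z_2,…,z_c)^{α−j}`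
for `0 ≤ j ≤ α−1`, each `I_j ∩ T̄` is an Artinian lex-segment ideal of `T̄`, and for
`0 ≤ j ≤ α−2` the initial degree of `I_j` is strictly greater than
`1 + max{i : [T̄/(I_{j+1} ∩ T̄)]_i ≠ 0}`. -/
theorem lexseg_decomposition {K : Type} [Field K] {c : ℕ} (hc : 1 ≤ c)
    (J : Ideal (MvPolynomial (Fin c) K))
    (hJ : IsLexSegmentIdeal J)
    (hArt : Module.Finite K (MvPolynomial (Fin c) K ⧸ J))
    (α : ℕ)
    (hα : (∃ p ∈ J, p ≠ 0 ∧ p.IsHomogeneous α) ∧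
      ∀ β : ℕ, (∃ p ∈ J, p ≠ 0 ∧ p.IsHomogeneous β) → α ≤ β)
    (t : ℕ)
    (ht : (∃ p : MvPolynomial (Fin c) K, p.IsHomogeneous t ∧ p ∉ J) ∧
      ∀ t' : ℕ, (∃ p : MvPolynomial (Fin c) K, p.IsHomogeneous t' ∧ p ∉ J) → t' ≤ t) :
    ∃ I : ℕ → Ideal (MvPolynomial (Fin c) K),
      IsDecompositionOf hc J α I ∧
      -- `(z_2,…,z_c)^{t+1−j} ⊆ I_j ⊆ (z_2,…,z_c)^{α−j}` for `0 ≤ j ≤ α−1`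
      (∀ j, j < α → (mBar K c) ^ (t + 1 - j) ≤ I j ∧ I j ≤ (mBar K c) ^ (α - j)) ∧
      -- each `I_j ∩ T̄` is an Artinian lex-segment ideal of `T̄`
      (∀ j, j < α →
        (∀ a b : Fin c →₀ ℕ, (∀ i : Fin c, i.1 = 0 → a i = 0) →
          (∀ i : Fin c, i.1 = 0 → b i = 0) → a.degree = b.degree → lexLT b a →
          (monomial b (1 : K)) ∈ I j → (monomial a (1 : K)) ∈ I j) ∧
        (∃ N : ℕ, ∀ a : Fin c →₀ ℕ, (∀ i : Fin c, i.1 = 0 → a i = 0) →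
          N ≤ a.degree → (monomial a (1 : K)) ∈ I j)) ∧
      -- the initial-degree inequality `a(I_j) > 1 + reg…(I_{j+1})`
      (∀ j, j + 2 ≤ α → ∀ e : ℕ,
        (∃ p : MvPolynomial (Fin c) K, p ≠ 0 ∧ p.IsHomogeneous e ∧
          (∀ a ∈ p.support, ∀ i : Fin c, i.1 = 0 → a i = 0) ∧ p ∉ I (j + 1)) →
        ∀ d : ℕ, (∃ q ∈ I j, q ≠ 0 ∧ q.IsHomogeneous d) → e + 1 < d) ∧
      -- uniqueness
      (∀ I' : ℕ → Ideal (MvPolynomial (Fin c) K),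
        IsDecompositionOf hc J α I' → ∀ j ≤ α, I' j = I j) := by
  classical
  obtain ⟨hJmon, hJlex⟩ := hJ
  have hdegsup : ∀ (p : MvPolynomial (Fin c) K) (n : ℕ), p.IsHomogeneous n →
      ∀ a ∈ p.support, a.degree = n := by
    intro p n hp a ha
    rw [Finsupp.degree_eq_weight_one]
    exact hp (mem_support_iff.1 ha)
  have hbig : ∀ a : Fin c →₀ ℕ, t + 1 ≤ a.degree → monomial a (1 : K) ∈ J := by
    intro a ha
    by_contra h
    have := ht.2 a.degree ⟨monomial a 1, isHomogeneous_monomial _ rfl, h⟩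
    omega
  have hlow : ∀ a : Fin c →₀ ℕ, monomial a (1 : K) ∈ J → α ≤ a.degree := by
    intro a ha
    exact hα.2 a.degree ⟨monomial a 1, ha, by simp [monomial_eq_zero],
      isHomogeneous_monomial _ rfl⟩
  have hmulmem : ∀ (w a : Fin c →₀ ℕ), monomial a (1 : K) ∈ J →
      monomial (w + a) (1 : K) ∈ J := by
    intro w a ha
    have h1 : monomial (w + a) (1 : K) = monomial w 1 * monomial a 1 := by
      rw [monomial_mul, one_mul]
    rw [h1]
    exact Ideal.mul_mem_left _ _ ha
  have hα1 : 1 ≤ α := by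
    by_contra h
    obtain ⟨p, hpJ, hp0, hph⟩ := hα.1
    obtain ⟨a, ha⟩ := Finset.nonempty_iff_ne_empty.2
      (fun hh => hp0 (support_eq_empty.1 hh))
    have hadeg : a.degree = α := hdegsup p α hph a ha
    have ha0 : a = 0 := by
      rw [← Finsupp.degree_eq_zero_iff]
      omega
    have h1 : (1 : MvPolynomial (Fin c) K) ∈ J := by
      have h2 := hJmon p hpJ a ha
      rw [ha0, monomial_zero', map_one] at h2
      exact h2
    obtain ⟨q, hq, hqJ⟩ := ht.1
    exact hqJ (((Ideal.eq_top_iff_one J).2 h1) ▸ Submodule.mem_top)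
  have hz1α : monomial (Finsupp.single (⟨0, hc⟩ : Fin c) α) (1 : K) ∈ J := by
    obtain ⟨p, hpJ, hp0, hph⟩ := hα.1
    obtain ⟨a, ha⟩ := Finset.nonempty_iff_ne_empty.2
      (fun hh => hp0 (support_eq_empty.1 hh))
    have haJ := hJmon p hpJ a ha
    have hadeg : a.degree = α := hdegsup p α hph a ha
    by_cases hae : a = Finsupp.single (⟨0, hc⟩ : Fin c) α
    · rwa [hae] at haJ
    · exact hJlex _ a (by rw [degree_single', hadeg]) (lexLT_max hc a α hadeg hae) haJ
  have hIchar : ∀ j, j < α → ∀ a : Fin c →₀ ℕ, a ⟨0, hc⟩ = 0 →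
      (monomial a (1 : K) ∈ Idl hc J α j ↔ a ∈ Sset hc J j) := by
    intro j hj a ha0
    rw [Idl_of_lt hc J hj]
    constructor
    · intro h
      obtain ⟨s, hs, hsa⟩ := monomial_mem_span_iff.1 h
      refine ⟨ha0, ?_⟩
      have heq : Finsupp.single (⟨0, hc⟩ : Fin c) j + a
          = (a - s) + (Finsupp.single (⟨0, hc⟩ : Fin c) j + s) := by
        conv_lhs => rw [← tsub_add_cancel_of_le hsa]
        rw [add_left_comm]
      rw [heq]
      exact hmulmem _ _ hs.2
    · intro hS
      exact Ideal.subset_span ⟨a, hS, rfl⟩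
  have hImono : ∀ j, j < α → ∀ p ∈ Idl hc J α j, ∀ m ∈ p.support,
      monomial m (1 : K) ∈ Idl hc J α j := by
    intro j hj p hp m hm
    rw [Idl_of_lt hc J hj] at hp ⊢
    exact monomial_mem_span_iff.2 (mem_span_monomials_support hp m hm)
  have hub : ∀ j, j < α → Idl hc J α j ≤ (mBar K c) ^ (α - j) := by
    intro j hj
    rw [Idl_of_lt hc J hj]
    refine Ideal.span_le.2 ?_
    rintro _ ⟨s, hs, rfl⟩
    refine monomial_mem_mBar_pow hc hs.1 ?_
    have h1 := hlow _ hs.2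
    rw [degree_add', degree_single'] at h1
    omega
  have hlb : ∀ j, j < α → (mBar K c) ^ (t + 1 - j) ≤ Idl hc J α j := by
    intro j hj
    refine le_trans (mBar_pow_le hc (t + 1 - j)) ?_
    rw [Idl_of_lt hc J hj]
    refine Ideal.span_le.2 ?_
    rintro _ ⟨b, hb, rfl⟩
    refine Ideal.subset_span ⟨b, ⟨hb.1, hbig _ ?_⟩, rfl⟩
    rw [degree_add', degree_single']
    have := hb.2
    omega
  have hchain : ∀ j, j < α → Idl hc J α j ≤ Idl hc J α (j + 1) := by
    intro j hj
    by_cases hj1 : α ≤ j + 1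
    · rw [Idl_of_le hc J hj1]; exact le_top
    · rw [Idl_of_lt hc J hj, Idl_of_lt hc J (by omega : j + 1 < α)]
      refine Ideal.span_le.2 ?_
      rintro _ ⟨s, hs, rfl⟩
      refine Ideal.subset_span ⟨s, ⟨hs.1, ?_⟩, rfl⟩
      have heq : Finsupp.single (⟨0, hc⟩ : Fin c) (j + 1) + s
          = Finsupp.single (⟨0, hc⟩ : Fin c) 1 + (Finsupp.single (⟨0, hc⟩ : Fin c) j + s) := by
        rw [← add_assoc, ← Finsupp.single_add, add_comm 1 j]
      rw [heq]
      exact hmulmem _ _ hs.2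
  have hne : 1 ≤ α → Idl hc J α (α - 1) ≠ ⊤ := by
    intro h1 htop
    have h2 := hub (α - 1) (by omega)
    rw [htop] at h2
    have h3 : (α - (α - 1)) = 1 := by omega
    rw [h3, pow_one] at h2
    have h4 : (1 : MvPolynomial (Fin c) K) ∈ mBar K c := h2 Submodule.mem_top
    have h5 : mBar K c ≤ RingHom.ker (constantCoeff (σ := Fin c) (R := K)) := by
      rw [mBar]
      refine Ideal.span_le.2 ?_
      rintro _ ⟨i, hi, rfl⟩
      simp [RingHom.mem_ker]
    have h6 := h5 h4
    rw [RingHom.mem_ker, map_one] at h6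
    exact one_ne_zero h6
  have hsumJ : J = ∑ j ∈ Finset.range (α + 1),
      Ideal.span {(X (⟨0, hc⟩ : Fin c) : MvPolynomial (Fin c) K) ^ j} * Idl hc J α j := by
    apply le_antisymm
    · intro p hp
      apply mem_ideal_of_support
      intro m hm
      have hmJ := hJmon p hp m hm
      by_cases hcase : α ≤ m ⟨0, hc⟩
      · have h2 : monomial (m - Finsupp.single (⟨0, hc⟩ : Fin c) α) (1 : K)
            ∈ Idl hc J α α := by
          rw [Idl_of_le hc J le_rfl]; exact Submodule.mem_top
        have h3 := Ideal.mul_mem_mul (Ideal.subset_span rfl :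
          (X (⟨0, hc⟩ : Fin c) : MvPolynomial (Fin c) K) ^ α ∈ Ideal.span
            {(X (⟨0, hc⟩ : Fin c) : MvPolynomial (Fin c) K) ^ α}) h2
        have hle : Finsupp.single (⟨0, hc⟩ : Fin c) α ≤ m := Finsupp.single_le_iff.2 hcase
        have heq : (X (⟨0, hc⟩ : Fin c) : MvPolynomial (Fin c) K) ^ α *
            monomial (m - Finsupp.single (⟨0, hc⟩ : Fin c) α) 1 = monomial m 1 := by
          rw [X_pow_eq_monomial, monomial_mul, one_mul,
            add_comm (Finsupp.single (⟨0, hc⟩ : Fin c) α) (m - Finsupp.single (⟨0, hc⟩ : Fin c) α),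
            tsub_add_cancel_of_le hle]
        rw [heq] at h3
        exact ideal_le_sum (Finset.self_mem_range_succ α) h3
      · push_neg at hcase
        have herase := Finsupp.single_add_erase (⟨0, hc⟩ : Fin c) m
        have hS : Finsupp.erase (⟨0, hc⟩ : Fin c) m ∈ Sset hc J (m ⟨0, hc⟩) :=
          ⟨Finsupp.erase_same, by rw [herase]; exact hmJ⟩
        have h2 : monomial (Finsupp.erase (⟨0, hc⟩ : Fin c) m) (1 : K)
            ∈ Idl hc J α (m ⟨0, hc⟩) := by
          rw [Idl_of_lt hc J hcase]
          exact Ideal.subset_span ⟨_, hS, rfl⟩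
        have h3 := Ideal.mul_mem_mul (Ideal.subset_span rfl :
          (X (⟨0, hc⟩ : Fin c) : MvPolynomial (Fin c) K) ^ (m ⟨0, hc⟩) ∈ Ideal.span
            {(X (⟨0, hc⟩ : Fin c) : MvPolynomial (Fin c) K) ^ (m ⟨0, hc⟩)}) h2
        have heq2 : (X (⟨0, hc⟩ : Fin c) : MvPolynomial (Fin c) K) ^ (m ⟨0, hc⟩) *
            monomial (Finsupp.erase (⟨0, hc⟩ : Fin c) m) 1 = monomial m 1 := by
          rw [X_pow_eq_monomial, monomial_mul, one_mul, herase]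
        rw [heq2] at h3
        exact ideal_le_sum (j := m ⟨0, hc⟩) (Finset.mem_range_succ_iff.2 (by omega)) h3
    · refine sum_ideal_le ?_
      intro j hj
      rw [Finset.mem_range] at hj
      refine Ideal.mul_le.2 ?_
      intro r hr s hs
      obtain ⟨u, rfl⟩ := Ideal.mem_span_singleton.1 hr
      have key : (X (⟨0, hc⟩ : Fin c) : MvPolynomial (Fin c) K) ^ j * s ∈ J := by
        by_cases hjα : α ≤ j
        · have hXJ : (X (⟨0, hc⟩ : Fin c) : MvPolynomial (Fin c) K) ^ j ∈ J := by
            rw [X_pow_eq_monomial]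
            have hje : j = α := by omega
            rw [hje]
            exact hz1α
          exact Ideal.mul_mem_right _ _ hXJ
        · rw [Idl_of_lt hc J (by omega : j < α)] at hs
          refine Submodule.span_induction ?_ ?_ ?_ ?_ hs
          · rintro _ ⟨a, haS, rfl⟩
            show (X (⟨0, hc⟩ : Fin c) : MvPolynomial (Fin c) K) ^ j * monomial a (1 : K) ∈ J
            rw [X_pow_eq_monomial, monomial_mul, one_mul]
            exact haS.2
          · rw [mul_zero]; exact Submodule.zero_mem _
          · intro x y hx hy px py
            rw [mul_add]; exact Submodule.add_mem _ px py
          · intro r x hx px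
            rw [smul_eq_mul, mul_left_comm]
            exact Ideal.mul_mem_left _ _ px
      have heq : (X (⟨0, hc⟩ : Fin c) : MvPolynomial (Fin c) K) ^ j * u * s
          = u * ((X (⟨0, hc⟩ : Fin c) : MvPolynomial (Fin c) K) ^ j * s) := by ring
      rw [heq]
      exact Ideal.mul_mem_left _ _ key
  have huniq : ∀ I' : ℕ → Ideal (MvPolynomial (Fin c) K),
      IsDecompositionOf hc J α I' → ∀ j ≤ α, I' j = Idl hc J α j := by
    intro I' hI' j hjα
    obtain ⟨hchain', htop', hne', hmono', hsum'⟩ := hI'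
    have hmono_chain : ∀ k l : ℕ, k ≤ l → l ≤ α → I' k ≤ I' l := by
      intro k l hkl hlα
      induction l with
      | zero =>
        have hk0 : k = 0 := by omega
        rw [hk0]
      | succ l ih =>
        rcases Nat.lt_or_ge k (l + 1) with h | h
        · exact le_trans (ih (by omega) (by omega)) (hchain' l (by omega))
        · have hk : k = l + 1 := by omega
          rw [hk]
    by_cases hjeq : j = α
    · rw [hjeq, htop', Idl_of_le hc J le_rfl]
    have hjlt : j < α := by omega
    apply le_antisymm
    · obtain ⟨S', hS'0, hS'eq⟩ := hmono' j hjlt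
      rw [hS'eq, Idl_of_lt hc J hjlt]
      refine Ideal.span_le.2 ?_
      rintro _ ⟨a, haS, rfl⟩
      have hterm : monomial (Finsupp.single (⟨0, hc⟩ : Fin c) j + a) (1 : K) ∈ J := by
        rw [hsum']
        refine ideal_le_sum (j := j) (Finset.mem_range_succ_iff.2 (by omega)) ?_
        have h2 : monomial a (1 : K) ∈ I' j := by
          rw [hS'eq]; exact Ideal.subset_span ⟨a, haS, rfl⟩
        have h3 := Ideal.mul_mem_mul (Ideal.subset_span rfl :
          (X (⟨0, hc⟩ : Fin c) : MvPolynomial (Fin c) K) ^ j ∈ Ideal.span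
            {(X (⟨0, hc⟩ : Fin c) : MvPolynomial (Fin c) K) ^ j}) h2
        have heq3 : (X (⟨0, hc⟩ : Fin c) : MvPolynomial (Fin c) K) ^ j *
            monomial a 1 = monomial (Finsupp.single (⟨0, hc⟩ : Fin c) j + a) 1 := by
          rw [X_pow_eq_monomial, monomial_mul, one_mul]
        rw [heq3] at h3
        exact h3
      exact Ideal.subset_span ⟨a, ⟨hS'0 a haS ⟨0, hc⟩ rfl, hterm⟩, rfl⟩
    · rw [Idl_of_lt hc J hjlt]
      refine Ideal.span_le.2 ?_
      rintro _ ⟨a, haS, rfl⟩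
      have hmJ : monomial (Finsupp.single (⟨0, hc⟩ : Fin c) j + a) (1 : K) ∈ J := haS.2
      have hJW : J ≤ Ideal.span ((fun m => monomial m (1 : K)) ''
          {m : Fin c →₀ ℕ | α ≤ m ⟨0, hc⟩ ∨
            (m ⟨0, hc⟩ < α ∧
              monomial (Finsupp.erase (⟨0, hc⟩ : Fin c) m) (1 : K) ∈ I' (m ⟨0, hc⟩))}) := by
        rw [hsum']
        refine sum_ideal_le ?_
        intro k hk
        rw [Finset.mem_range] at hk
        by_cases hkα : α ≤ k
        · have hkeq : k = α := by omega
          rw [hkeq, htop', Ideal.mul_top]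
          refine Ideal.span_le.2 ?_
          rintro x hx
          rw [Set.mem_singleton_iff] at hx
          subst hx
          rw [X_pow_eq_monomial]
          refine Ideal.subset_span ⟨_, Or.inl ?_, rfl⟩
          rw [Finsupp.single_eq_same]
        · push_neg at hkα
          obtain ⟨Sk, hSk0, hSkeq⟩ := hmono' k hkα
          rw [hSkeq, Ideal.span_mul_span']
          refine Ideal.span_le.2 ?_
          rintro q hq
          obtain ⟨x, hx, y, hy, rfl⟩ := Set.mem_mul.1 hq
          rw [Set.mem_singleton_iff] at hx
          subst hx
          obtain ⟨b, hbS, rfl⟩ := hy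
          have hb0 : b ⟨0, hc⟩ = 0 := hSk0 b hbS ⟨0, hc⟩ rfl
          show (X (⟨0, hc⟩ : Fin c) : MvPolynomial (Fin c) K) ^ k * monomial b (1 : K) ∈ _
          rw [X_pow_eq_monomial, monomial_mul, one_mul]
          refine Ideal.subset_span ⟨_, Or.inr ⟨?_, ?_⟩, rfl⟩
          · rw [apply_single_add hc k hb0]
            exact hkα
          · rw [apply_single_add hc k hb0, erase_single_add hc k hb0, hSkeq]
            exact Ideal.subset_span ⟨b, hbS, rfl⟩
      obtain ⟨w, hwW, hwle⟩ := monomial_mem_span_iff.1 (hJW hmJ)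
      have hme0 : (Finsupp.single (⟨0, hc⟩ : Fin c) j + a) ⟨0, hc⟩ = j :=
        apply_single_add hc j haS.1
      have hwe0 : w ⟨0, hc⟩ ≤ j := by
        have h3 := Finsupp.le_def.1 hwle ⟨0, hc⟩
        omega
      rcases hwW with hge | ⟨hlt2, hwI⟩
      · omega
      · have hle2 : Finsupp.erase (⟨0, hc⟩ : Fin c) w ≤ a := by
          rw [Finsupp.le_def]
          intro i
          by_cases hie : i = ⟨0, hc⟩
          · rw [hie, Finsupp.erase_same]
            exact Nat.zero_le _
          · rw [Finsupp.erase_ne hie]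
            have h3 := Finsupp.le_def.1 hwle i
            rw [Finsupp.add_apply, Finsupp.single_apply,
              if_neg (fun hh => hie hh.symm), zero_add] at h3
            exact h3
        have h4 : monomial a (1 : K) = monomial (a - Finsupp.erase (⟨0, hc⟩ : Fin c) w) 1 *
            monomial (Finsupp.erase (⟨0, hc⟩ : Fin c) w) 1 := by
          rw [monomial_mul, one_mul, tsub_add_cancel_of_le hle2]
        show monomial a (1 : K) ∈ I' j
        rw [h4]
        exact Ideal.mul_mem_left _ _ (hmono_chain _ _ hwe0 (by omega) hwI)
  refine ⟨Idl hc J α, ⟨hchain, Idl_of_le hc J le_rfl, fun h => hne h, ?_, hsumJ⟩,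
    fun j hj => ⟨hlb j hj, hub j hj⟩, ?_, ?_, huniq⟩
  · -- monomial sets
    intro j hj
    refine ⟨Sset hc J j, ?_, Idl_of_lt hc J hj⟩
    intro a haS i hi
    have hie : i = (⟨0, hc⟩ : Fin c) := Fin.ext hi
    rw [hie]
    exact haS.1
  · -- lex + artinian
    intro j hj
    constructor
    · intro a b ha hb hdeg hlex hbmem
      have ha0 : a ⟨0, hc⟩ = 0 := ha _ rfl
      have hb0 : b ⟨0, hc⟩ = 0 := hb _ rfl
      have hbS := (hIchar j hj b hb0).1 hbmem
      refine (hIchar j hj a ha0).2 ⟨ha0, ?_⟩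
      refine hJlex _ _ ?_ (lexLT_add_single hc ha0 hb0 hlex j) hbS.2
      simp only [degree_add', degree_single']
      omega
    · refine ⟨t + 1, ?_⟩
      intro a ha hN
      refine (hIchar j hj a (ha _ rfl)).2 ⟨ha _ rfl, hbig _ ?_⟩
      rw [degree_add', degree_single']
      omega
  · -- initial degree inequality
    intro j hj2 e he d hd
    obtain ⟨p, hp0, hph, hpsupp, hpnot⟩ := he
    obtain ⟨q, hqI, hq0, hqh⟩ := hd
    by_contra hcon
    push_neg at hcon
    have hex : ∃ a ∈ p.support, monomial a (1 : K) ∉ Idl hc J α (j + 1) := by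
      by_contra hh
      push_neg at hh
      exact hpnot (mem_ideal_of_support hh)
    obtain ⟨a, hamem, hanot⟩ := hex
    have ha0 : a ⟨0, hc⟩ = 0 := hpsupp a hamem _ rfl
    have hadeg : a.degree = e := hdegsup p e hph a hamem
    obtain ⟨b, hbmem⟩ := Finset.nonempty_iff_ne_empty.2
      (fun hh => hq0 (support_eq_empty.1 hh))
    have hbdeg : b.degree = d := hdegsup q d hqh b hbmem
    have hbI : monomial b (1 : K) ∈ Idl hc J α j := hImono j (by omega) q hqI b hbmem
    rw [Idl_of_lt hc J (by omega : j < α)] at hbI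
    obtain ⟨s, hsS, hsb⟩ := monomial_mem_span_iff.1 hbI
    have hsd : s.degree ≤ d := hbdeg ▸ degree_mono hsb
    by_cases hc2 : 2 ≤ c
    · have hkey : monomial (Finsupp.single (⟨0, hc⟩ : Fin c) (j + 1) + a) (1 : K) ∈ J := by
        have hm2 : monomial (Finsupp.single (⟨1, hc2⟩ : Fin c) (e + 1 - s.degree) +
            (Finsupp.single (⟨0, hc⟩ : Fin c) j + s)) (1 : K) ∈ J := hmulmem _ _ hsS.2
        refine hJlex _ _ ?_ ?_ hm2
        · simp only [degree_add', degree_single']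
          omega
        · refine ⟨⟨0, hc⟩, ?_, ?_⟩
          · rw [Finsupp.add_apply, Finsupp.add_apply, Finsupp.add_apply,
              Finsupp.single_eq_same, Finsupp.single_eq_same,
              Finsupp.single_apply,
              if_neg (fun hh : (⟨1, hc2⟩ : Fin c) = (⟨0, hc⟩ : Fin c) =>
                one_ne_zero (congrArg Fin.val hh)),
              hsS.1, ha0]
            omega
          · intro j' hj'
            exact absurd (Fin.lt_def.1 hj') (Nat.not_lt_zero _)
      exact hanot ((hIchar (j + 1) (by omega) a ha0).2 ⟨ha0, hkey⟩)
    · have hs0 : s = 0 := by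
        refine Finsupp.ext fun i => ?_
        have hie : i = (⟨0, hc⟩ : Fin c) := Fin.ext (by have := i.isLt; omega)
        rw [hie]
        exact hsS.1
      have h5 := hlow _ hsS.2
      rw [hs0, add_zero, degree_single'] at h5
      omega

end GorensteinSI
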